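/- The space a(0) is a Lie subalgebra of ⨁_{b∈ℤ/nℤ} gl_n(O), and the projection onto the component b = 0 restricts to an injective Lie algebra homomorphism on a(0) whose image is exactly the Iwahori algebra I; hence a(0) is isomorphic to I as a Lie algebra. -/

import Mathlib

/-- The ring `O = ℂ[[z]]` of formal power series. -/
noncomputable abbrev O : Type := PowerSeries ℂ

/-- Index type for the `n²` generators: `n` diagonal ones, and an upper and a lower one
for each pair `i < j`. -/
abbrev GenIdx (n : ℕ) : Type :=
  Fin n ⊕ ({p : Fin n × Fin n // p.1 < p.2} ⊕ {p : Fin n × Fin n // p.1 < p.2})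

/-- The generators `d_i`, `u_{i,j}(0)`, `l_{i,j}(0)` of `a(0)`.  Indices are 0-based:
the 1-based condition `i ≤ b ≤ j-1` for `1 ≤ i < j ≤ n`, `b ∈ {0,…,n-1}` reads
`i < b ∧ b ≤ j` in 0-based row/column indices `i < j`. -/
noncomputable def gen0 (n : ℕ) : GenIdx n → (Fin n → Matrix (Fin n) (Fin n) O)
  | Sum.inl i => fun _ => Matrix.single i i 1
  | Sum.inr (Sum.inl ⟨(i, j), _⟩) => fun b =>
      if i.val < b.val ∧ b.val ≤ j.val then Matrix.single i j PowerSeries.X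
      else Matrix.single i j 1
  | Sum.inr (Sum.inr ⟨(i, j), _⟩) => fun b =>
      if i.val < b.val ∧ b.val ≤ j.val then Matrix.single j i 1
      else Matrix.single j i PowerSeries.X

/-- The `O`-submodule `a(0)` of `⨁_{b ∈ ℤ/nℤ} gl_n(O)`. -/
noncomputable def aZero (n : ℕ) : Submodule O (Fin n → Matrix (Fin n) (Fin n) O) :=
  Submodule.span O (Set.range (gen0 n))

/-- The Iwahori algebra `I ⊆ gl_n(ℂ[[z]])`: matrices whose entries strictly below the
diagonal have vanishing constant term. -/
def IwahoriSet (n : ℕ) : Set (Matrix (Fin n) (Fin n) O) :=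
  {X | ∀ i j : Fin n, j < i → PowerSeries.constantCoeff (R := ℂ) (X i j) = 0}

open PowerSeries in
noncomputable def wgt (n : ℕ) (p q b : Fin n) : O :=
  if (p.val < q.val ∧ p.val < b.val ∧ b.val ≤ q.val) ∨
     (q.val < p.val ∧ ¬(q.val < b.val ∧ b.val ≤ p.val)) then X else 1

open PowerSeries in
noncomputable def ugt (n : ℕ) (p r q : Fin n) : O :=
  if (r.val < p.val ∧ q.val < r.val) ∨
     (p.val ≤ q.val ∧ (r.val < p.val ∨ q.val < r.val)) then X else 1

noncomputable def Phi (n : ℕ) (c : Fin n × Fin n → O) : Fin n → Matrix (Fin n) (Fin n) O :=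
  fun b => Matrix.of fun p q => wgt n p q b * c (p, q)

lemma Phi_apply (n : ℕ) (c : Fin n × Fin n → O) (b p q : Fin n) :
    Phi n c b p q = wgt n p q b * c (p, q) := rfl

lemma wgt_mul (n : ℕ) (p r q b : Fin n) :
    wgt n p r b * wgt n r q b = ugt n p r q * wgt n p q b := by
  unfold wgt ugt
  split_ifs <;> first | ring1 | omega

lemma wgt_ne_zero (n : ℕ) (p q b : Fin n) : wgt n p q b ≠ 0 := by
  unfold wgt; split_ifs
  · exact PowerSeries.X_ne_zero
  · exact one_ne_zero

lemma gen0_diag (n : ℕ) (i : Fin n) :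
    gen0 n (Sum.inl i) = Phi n (fun pq => if pq = (i, i) then 1 else 0) := by
  funext b; refine Matrix.ext fun r s => ?_
  simp only [gen0, Phi, Matrix.single, Matrix.of_apply, wgt, Prod.mk.injEq,
    Fin.ext_iff]
  split_ifs <;> first | ring1 | omega

lemma gen0_up (n : ℕ) (i j : Fin n) (h : i < j) :
    gen0 n (Sum.inr (Sum.inl ⟨(i, j), h⟩)) = Phi n (fun pq => if pq = (i, j) then 1 else 0) := by
  have h' : i.val < j.val := h
  funext b; refine Matrix.ext fun r s => ?_
  by_cases hb : i.val < b.val ∧ b.val ≤ j.val <;>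
    simp only [gen0, Phi, Matrix.single, Matrix.of_apply, wgt, Prod.mk.injEq,
      Fin.ext_iff, hb, if_true, if_false, ite_true, ite_false, true_and, and_true, not_true, not_false_iff] <;>
    split_ifs <;> (try simp only [Matrix.of_apply]) <;> (try split_ifs) <;>
      first | ring1 | omega

lemma gen0_low (n : ℕ) (i j : Fin n) (h : i < j) :
    gen0 n (Sum.inr (Sum.inr ⟨(i, j), h⟩)) = Phi n (fun pq => if pq = (j, i) then 1 else 0) := by
  have h' : i.val < j.val := h
  funext b; refine Matrix.ext fun r s => ?_
  by_cases hb : i.val < b.val ∧ b.val ≤ j.val <;>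
    simp only [gen0, Phi, Matrix.single, Matrix.of_apply, wgt, Prod.mk.injEq,
      Fin.ext_iff, hb, if_true, if_false, ite_true, ite_false, true_and, and_true, not_true, not_false_iff] <;>
    split_ifs <;> (try simp only [Matrix.of_apply]) <;> (try split_ifs) <;>
      first | ring1 | omega

lemma Phi_single_mem (n : ℕ) (p q : Fin n) :
    Phi n (fun pq => if pq = (p, q) then (1:O) else 0) ∈ Set.range (gen0 n) := by
  rcases lt_trichotomy p q with h | h | h
  · exact ⟨_, gen0_up n p q h⟩
  · subst h; exact ⟨_, gen0_diag n p⟩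
  · exact ⟨_, gen0_low n q p h⟩

lemma Phi_mem (n : ℕ) (c : Fin n × Fin n → O) : Phi n c ∈ aZero n := by
  have hrep : Phi n c =
      ∑ pq : Fin n × Fin n, c pq • Phi n (fun r => if r = pq then 1 else 0) := by
    funext b; refine Matrix.ext fun i j => ?_
    simp only [Finset.sum_apply, Matrix.sum_apply, Pi.smul_apply, Matrix.smul_apply,
      smul_eq_mul, Phi_apply, mul_ite, mul_one, mul_zero]
    rw [Finset.sum_ite_eq Finset.univ (i, j) (fun pq => c pq * wgt n i j b)]
    simp [mul_comm]
  rw [hrep]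
  exact Submodule.sum_mem _ fun pq _ =>
    Submodule.smul_mem _ _ (Submodule.subset_span (Phi_single_mem n pq.1 pq.2))

lemma mem_aZero_iff (n : ℕ) (A : Fin n → Matrix (Fin n) (Fin n) O) :
    A ∈ aZero n ↔ ∃ c, A = Phi n c := by
  constructor
  · intro hA
    induction hA using Submodule.span_induction with
    | mem x hx =>
      obtain ⟨idx, rfl⟩ := hx
      rcases idx with i | ⟨⟨⟨i, j⟩, h⟩ | ⟨⟨i, j⟩, h⟩⟩
      · exact ⟨_, gen0_diag n i⟩
      · exact ⟨_, gen0_up n i j h⟩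
      · exact ⟨_, gen0_low n i j h⟩
    | zero => exact ⟨0, by funext b; refine Matrix.ext fun p q => ?_; simp [Phi_apply]⟩
    | add x y hx hy ihx ihy =>
      obtain ⟨c, rfl⟩ := ihx; obtain ⟨d, rfl⟩ := ihy
      exact ⟨c + d, by funext b; refine Matrix.ext fun p q => ?_; simp [Phi_apply, mul_add]⟩
    | smul a x hx ihx =>
      obtain ⟨c, rfl⟩ := ihx
      exact ⟨a • c, by funext b; refine Matrix.ext fun p q => ?_; simp [Phi_apply, smul_eq_mul]; ring⟩
  · rintro ⟨c, rfl⟩; exact Phi_mem n c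

noncomputable def pc (n : ℕ) (c d : Fin n × Fin n → O) : Fin n × Fin n → O :=
  fun pq => ∑ r : Fin n, ugt n pq.1 r pq.2 * (c (pq.1, r) * d (r, pq.2))

lemma Phi_mul (n : ℕ) (c d : Fin n × Fin n → O) (b : Fin n) :
    Phi n c b * Phi n d b = Phi n (pc n c d) b := by
  refine Matrix.ext fun p q => ?_
  simp only [Matrix.mul_apply, Phi_apply, pc, Finset.mul_sum]
  refine Finset.sum_congr rfl fun r _ => ?_
  calc wgt n p r b * c (p, r) * (wgt n r q b * d (r, q))
      = (wgt n p r b * wgt n r q b) * (c (p, r) * d (r, q)) := by ring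
    _ = _ := by rw [wgt_mul]; ring

lemma Phi_sub (n : ℕ) (c d : Fin n × Fin n → O) :
    Phi n (c - d) = Phi n c - Phi n d := by
  funext b; refine Matrix.ext fun p q => ?_
  simp [Phi_apply, mul_sub]


/-- `a(0)` is a Lie subalgebra of `⨁_{b ∈ ℤ/nℤ} gl_n(O)` (it is an
`O`-submodule closed under the componentwise commutator bracket), the projection onto
the component `b = 0` is injective on `a(0)` (and it automatically preserves the
bracket), and its image is exactly the Iwahori algebra `I`; hence `a(0) ≅ I` as Lie
algebras. -/
theorem statement2 (n : ℕ) [NeZero n] (hn : 2 ≤ n) :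
    (∀ A ∈ aZero n, ∀ B ∈ aZero n,
        (fun b => A b * B b - B b * A b) ∈ aZero n) ∧
    Set.InjOn (fun A : Fin n → Matrix (Fin n) (Fin n) O => A 0) (aZero n : Set _) ∧
    (fun A : Fin n → Matrix (Fin n) (Fin n) O => A 0) '' (aZero n : Set _)
      = IwahoriSet n := by
  refine ⟨?_, ?_, ?_⟩
  · intro A hA B hB
    obtain ⟨c, rfl⟩ := (mem_aZero_iff n A).mp hA
    obtain ⟨d, rfl⟩ := (mem_aZero_iff n B).mp hB
    have : (fun b => Phi n c b * Phi n d b - Phi n d b * Phi n c b)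
        = Phi n (pc n c d - pc n d c) := by
      funext b
      rw [Phi_sub, Pi.sub_apply, Phi_mul, Phi_mul]
    rw [this]
    exact Phi_mem n _
  · intro A hA B hB h
    obtain ⟨c, rfl⟩ := (mem_aZero_iff n A).mp hA
    obtain ⟨d, rfl⟩ := (mem_aZero_iff n B).mp hB
    have hc : c = d := by
      funext pq
      obtain ⟨p, q⟩ := pq
      have he : Phi n c 0 p q = Phi n d 0 p q := by
        have h0 : Phi n c 0 = Phi n d 0 := h
        rw [h0]
      rw [Phi_apply, Phi_apply] at he
      exact mul_left_cancel₀ (wgt_ne_zero n p q 0) he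
    rw [hc]
  · ext M
    constructor
    · rintro ⟨A, hA, rfl⟩
      obtain ⟨c, rfl⟩ := (mem_aZero_iff n A).mp hA
      intro i j hij
      have hw : wgt n i j 0 = PowerSeries.X := by
        unfold wgt
        rw [if_pos (Or.inr ⟨hij, by simp⟩)]
      show PowerSeries.constantCoeff (R := ℂ) (Phi n c 0 i j) = 0
      rw [Phi_apply, hw, map_mul, PowerSeries.constantCoeff_X, zero_mul]
    · intro hM
      refine ⟨Phi n (fun pq => if h : pq.2 < pq.1 then
          Classical.choose (PowerSeries.X_dvd_iff.mpr (hM pq.1 pq.2 h)) else M pq.1 pq.2),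
        Phi_mem n _, ?_⟩
      refine Matrix.ext fun p q => ?_
      show wgt n p q 0 * (if h : q < p then
          Classical.choose (PowerSeries.X_dvd_iff.mpr (hM p q h)) else M p q) = M p q
      by_cases h : q < p
      · rw [dif_pos h]
        have hw : wgt n p q 0 = PowerSeries.X := by
          unfold wgt
          rw [if_pos (Or.inr ⟨h, by simp⟩)]
        rw [hw]
        exact (Classical.choose_spec (PowerSeries.X_dvd_iff.mpr (hM p q h))).symm
      · rw [dif_neg h]
        have hw : wgt n p q 0 = 1 := by
          have h' : ¬ q.val < p.val := h
          have h0 : (0 : Fin n).val = 0 := rfl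
          unfold wgt
          rw [if_neg]
          rw [h0]
          omega
        rw [hw, one_mul]
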